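/- For orthonormal e,e' ∈ E, the sectional curvature is K(e,e') = −¾ ε̄ ε̄' ⟨[e,e'],[e,e']⟩, where ε̄ = ⟨e,e⟩ and ε̄' = ⟨e',e'⟩. -/

import Mathlib

/-- For orthonormal `e, e' ∈ E`, the sectional curvature is
`K(e,e') = -¾ ε̄ ε̄' ⟨[e,e'], [e,e']⟩`, where `ε̄ = ⟨e,e⟩` and `ε̄' = ⟨e',e'⟩`.
Here `n = U ⊕ Z ⊕ V ⊕ E` is a 2-step nilpotent metric Lie algebra, the Levi-Civita
connection is `∇_x y = ½([x,y] - ad⁺_x y - ad⁺_y x)`,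
`R(x,y)w = ∇_x ∇_y w - ∇_y ∇_x w - ∇_{[x,y]} w`, and
`K(x,y) = ⟨R(x,y)y, x⟩ / (⟨x,x⟩⟨y,y⟩ - ⟨x,y⟩²)`. -/
theorem sectional_curvature_E_E
    {n : Type*} [LieRing n] [LieAlgebra ℝ n]
    (B : LinearMap.BilinForm ℝ n) (hBsymm : ∀ x y : n, B x y = B y x)
    (hBnd : B.Nondegenerate)
    (U Z V E : Submodule ℝ n)
    (hcent : ∀ c ∈ U ⊔ Z, ∀ x : n, ⁅c, x⁆ = 0)
    (h2step : ∀ x y : n, ⁅x, y⁆ ∈ U ⊔ Z)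
    (hdecomp : U ⊔ Z ⊔ V ⊔ E = ⊤)
    (hUU : ∀ u ∈ U, ∀ u' ∈ U, B u u' = 0)
    (hVV : ∀ v ∈ V, ∀ v' ∈ V, B v v' = 0)
    (hUZ : ∀ u ∈ U, ∀ z ∈ Z, B u z = 0)
    (hUE : ∀ u ∈ U, ∀ e ∈ E, B u e = 0)
    (hVZ : ∀ v ∈ V, ∀ z ∈ Z, B v z = 0)
    (hVE : ∀ v ∈ V, ∀ e ∈ E, B v e = 0)
    (hZE : ∀ z ∈ Z, ∀ e ∈ E, B z e = 0)
    (adP : n →ₗ[ℝ] n →ₗ[ℝ] n)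
    (hadP : ∀ x y w : n, B (adP x y) w = B y ⁅x, w⁆)
    (nabla : n → n → n)
    (hnabla : ∀ x y : n, nabla x y = (2:ℝ)⁻¹ • (⁅x, y⁆ - adP x y - adP y x))
    (R : n → n → n → n)
    (hR : ∀ x y w : n,
      R x y w = nabla x (nabla y w) - nabla y (nabla x w) - nabla ⁅x, y⁆ w)
    (e e' : n) (he : e ∈ E) (he' : e' ∈ E)
    (he1 : B e e = 1 ∨ B e e = -1) (he'1 : B e' e' = 1 ∨ B e' e' = -1)
    (hee' : B e e' = 0) :
    B (R e e' e') e / (B e e * B e' e' - B e e' ^ 2)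
      = -(3/4 : ℝ) * B e e * B e' e' * B ⁅e, e'⁆ ⁅e, e'⁆ := by
  -- E is orthogonal to U ⊔ Z
  have hEperp : ∀ f ∈ E, ∀ m ∈ U ⊔ Z, B f m = 0 := by
    intro f hf m hm
    obtain ⟨u, hu, z, hz, rfl⟩ := Submodule.mem_sup.mp hm
    rw [map_add, hBsymm f u, hBsymm f z, hUE u hu f hf, hZE z hz f hf, add_zero]
  -- adP x f = 0 for f ∈ E
  have hadPE : ∀ x : n, ∀ f ∈ E, adP x f = 0 := by
    intro x f hf
    apply hBnd.1
    intro w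
    rw [hadP]
    exact hEperp f hf _ (h2step x w)
  -- adP c y = 0 for central c
  have hadPC : ∀ c ∈ U ⊔ Z, ∀ y : n, adP c y = 0 := by
    intro c hc y
    apply hBnd.1
    intro w
    rw [hadP, hcent c hc w, map_zero]
  set c := ⁅e, e'⁆ with hcdef
  have hcm : c ∈ U ⊔ Z := h2step e e'
  have hce' : ⁅c, e'⁆ = 0 := hcent c hcm e'
  have h1 : nabla e' e' = 0 := by
    rw [hnabla, lie_self, hadPE e' e' he']; simp
  have h2 : nabla e e' = (2:ℝ)⁻¹ • c := by
    rw [hnabla, hadPE e e' he', hadPE e' e he]; simp; rfl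
  have h3 : nabla e (nabla e' e') = 0 := by
    rw [h1, hnabla]
    simp
  have h4 : nabla e' (nabla e e') = -((4:ℝ)⁻¹ • adP e' c) := by
    rw [h2, hnabla]
    have hl : ⁅e', (2:ℝ)⁻¹ • c⁆ = 0 := by
      rw [lie_smul, ← lie_skew, hce']; simp
    have ha : adP ((2:ℝ)⁻¹ • c) e' = 0 := by
      rw [map_smul, LinearMap.smul_apply, hadPC c hcm e', smul_zero]
    rw [hl, ha, map_smul]
    module
  have h5 : nabla c e' = -((2:ℝ)⁻¹ • adP e' c) := by
    rw [hnabla, hce', hadPC c hcm e']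
    module
  have hRval : R e e' e' = (3/4 : ℝ) • adP e' c := by
    rw [hR, h3, ← hcdef, h4, h5]
    module
  have hBval : B (R e e' e') e = -(3/4 : ℝ) * B c c := by
    rw [hRval, map_smul, LinearMap.smul_apply, hadP, ← lie_skew, map_neg]
    rw [← hcdef, smul_neg, smul_eq_mul]
    ring
  rw [hBval, hee']
  rcases he1 with h | h <;> rcases he'1 with h' | h' <;> rw [h, h'] <;> ring
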